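/- Let A be a lattice with zero, and let U be a member of the ideal Int⁎A of the Boolean algebra generated by the sets (a] ∩ (A∖{0}) (a ∈ A∖{0}) inside the power set of A∖{0}, consisting of those members contained in some (a] ∩ (A∖{0}). Then: (1) every element of U lies below some maximal element of U, and (2) the set Max U of maximal elements of U is finite. -/

import Mathlib

/-- Membership in `Int A`, the Boolean subalgebra of the power set of `A∖{0}` generated by
the truncated principal ideals `(a]• = {x ∈ A∖{0} : x ≤ a}`, for `a ∈ A∖{0}`. -/
inductive MemInt {α : Type*} [Lattice α] [OrderBot α] : Set {a : α // a ≠ ⊥} → Prop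
  | principal (a : α) (ha : a ≠ ⊥) : MemInt {x | x.1 ≤ a}
  | univ : MemInt Set.univ
  | compl {s} : MemInt s → MemInt sᶜ
  | union {s t} : MemInt s → MemInt t → MemInt (s ∪ t)

/-- Membership in `Int⁎A`, the ideal of `Int A` of members contained in some `(a]•`. -/
def MemIntStar {α : Type*} [Lattice α] [OrderBot α] (s : Set {a : α // a ≠ ⊥}) : Prop :=
  MemInt s ∧ ∃ a : α, ∀ x ∈ s, (x : {a : α // a ≠ ⊥}).1 ≤ a

namespace Stmt11Aux

variable {α : Type*} [Lattice α] [OrderBot α] [DecidableEq α]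

def TermSet (p : Option α × Finset α) : Set {a : α // a ≠ ⊥} :=
  {x | (∀ a ∈ p.1, x.1 ≤ a) ∧ ∀ b ∈ p.2, ¬ x.1 ≤ b}

def NF (s : Set {a : α // a ≠ ⊥}) : Prop :=
  ∃ L : Finset (Option α × Finset α), s = ⋃ p ∈ L, TermSet p

def merge (p q : Option α × Finset α) : Option α × Finset α :=
  (match p.1, q.1 with
   | none, o => o
   | some a, none => some a
   | some a, some b => some (a ⊓ b), p.2 ∪ q.2)

lemma termSet_merge (p q : Option α × Finset α) :
    TermSet (merge p q) = TermSet p ∩ TermSet q := by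
  ext x
  rcases p with ⟨o₁, N₁⟩; rcases q with ⟨o₂, N₂⟩
  cases o₁ <;> cases o₂ <;>
    simp [TermSet, merge, le_inf_iff, or_imp, forall_and] <;> tauto

lemma nf_inter {s t : Set {a : α // a ≠ ⊥}} (hs : NF s) (ht : NF t) : NF (s ∩ t) := by
  obtain ⟨L₁, rfl⟩ := hs
  obtain ⟨L₂, rfl⟩ := ht
  refine ⟨(L₁ ×ˢ L₂).image (fun pq => merge pq.1 pq.2), ?_⟩
  ext x
  constructor
  · rintro ⟨hxs, hxt⟩
    simp only [Set.mem_iUnion, exists_prop] at hxs hxt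
    obtain ⟨p, hp, hxp⟩ := hxs
    obtain ⟨q, hq, hxq⟩ := hxt
    refine Set.mem_biUnion (Finset.mem_image.mpr ⟨(p, q), Finset.mem_product.mpr ⟨hp, hq⟩, rfl⟩) ?_
    rw [termSet_merge]; exact ⟨hxp, hxq⟩
  · intro hx
    simp only [Set.mem_iUnion, exists_prop, Finset.mem_image] at hx
    obtain ⟨r, ⟨pq, hpq, rfl⟩, hxr⟩ := hx
    rw [termSet_merge] at hxr
    obtain ⟨hp, hq⟩ := Finset.mem_product.mp hpq
    exact ⟨Set.mem_biUnion hp hxr.1, Set.mem_biUnion hq hxr.2⟩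

lemma nf_univ : NF (Set.univ : Set {a : α // a ≠ ⊥}) := by
  refine ⟨{(none, ∅)}, ?_⟩
  ext x; simp [TermSet]

lemma nf_compl_term (p : Option α × Finset α) : NF (TermSet p)ᶜ := by
  rcases p with ⟨o, N⟩
  refine ⟨(match o with
      | none => (∅ : Finset (Option α × Finset α))
      | some a => {(none, ({a} : Finset α))}) ∪ N.image (fun b => (some b, (∅ : Finset α))), ?_⟩
  ext x
  cases o <;>
    simp [TermSet, Finset.mem_union, not_forall] <;> tauto

lemma nf_iInter_compl (L : Finset (Option α × Finset α)) :
    NF (⋂ p ∈ L, (TermSet p)ᶜ) := by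
  classical
  induction L using Finset.induction with
  | empty => simpa using nf_univ
  | insert _ _ h ih =>
    rw [Finset.set_biInter_insert]
    exact nf_inter (nf_compl_term _) ih

lemma nf_compl {s : Set {a : α // a ≠ ⊥}} (hs : NF s) : NF sᶜ := by
  obtain ⟨L, rfl⟩ := hs
  simp only [Set.compl_iUnion]
  exact nf_iInter_compl L

lemma memInt_nf {s : Set {a : α // a ≠ ⊥}} (hs : MemInt s) : NF s := by
  induction hs with
  | principal a ha =>
    refine ⟨{(some a, ∅)}, ?_⟩
    ext x; simp [TermSet]
  | univ => exact nf_univ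
  | compl _ ih => exact nf_compl ih
  | union _ _ ih₁ ih₂ =>
    obtain ⟨L₁, rfl⟩ := ih₁
    obtain ⟨L₂, rfl⟩ := ih₂
    exact ⟨L₁ ∪ L₂, (Finset.set_biUnion_union _ _ _).symm⟩

lemma key (U : Set {a : α // a ≠ ⊥}) (hU : MemIntStar U) :
    ∃ F : Finset α, ∀ x ∈ U, ∃ d ∈ F, ∃ h : d ≠ ⊥,
      x.1 ≤ d ∧ (⟨d, h⟩ : {a : α // a ≠ ⊥}) ∈ U := by
  obtain ⟨hInt, c, hc⟩ := hU
  obtain ⟨L, rfl⟩ := memInt_nf hInt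
  refine ⟨L.image (fun p => match p.1 with | some a => a ⊓ c | none => c), ?_⟩
  intro x hx
  have hx' := hx
  simp only [Set.mem_iUnion, exists_prop] at hx'
  obtain ⟨p, hpL, hxp⟩ := hx'
  have hxc : x.1 ≤ c := hc x hx
  set d := (match p.1 with | some a => a ⊓ c | none => c) with hd_def
  have hxd : x.1 ≤ d := by
    cases hp : p.1 with
    | none => simp [hd_def, hp, hxc]
    | some a =>
      have := hxp.1 a (by simp [hp])
      simp [hd_def, hp, le_inf_iff, hxc, this]
  have hd : d ≠ ⊥ := fun h => x.2 (le_bot_iff.mp (hxd.trans_eq h))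
  have hdp : (⟨d, hd⟩ : {a : α // a ≠ ⊥}) ∈ TermSet p := by
    constructor
    · intro a ha
      cases hp : p.1 with
      | none => simp [hp] at ha
      | some a' =>
        rw [hp] at ha
        simp only [Option.mem_def, Option.some.injEq] at ha
        subst ha
        simp [hd_def, hp]
    · intro b hb hle
      exact hxp.2 b hb (hxd.trans hle)
  refine ⟨d, Finset.mem_image.mpr ⟨p, hpL, rfl⟩, hd, hxd, ?_⟩
  exact Set.mem_biUnion hpL hdp

end Stmt11Aux

/-- If `U ∈ Int⁎A`, then every element of `U` lies below some maximal element of `U`,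
and the set of maximal elements of `U` is finite. -/
theorem stmt11 {α : Type*} [Lattice α] [OrderBot α]
    (U : Set {a : α // a ≠ ⊥}) (hU : MemIntStar U) :
    (∀ x ∈ U, ∃ m ∈ U, x ≤ m ∧ ∀ y ∈ U, m ≤ y → y = m) ∧
      Set.Finite {m | m ∈ U ∧ ∀ y ∈ U, m ≤ y → y = m} := by
  classical
  obtain ⟨F, hF⟩ := Stmt11Aux.key U hU
  set S : Set {a : α // a ≠ ⊥} := {y | y ∈ U ∧ y.1 ∈ F} with hS_def
  have hSfin : S.Finite := by
    apply Set.Finite.subset (Set.Finite.preimage (Subtype.val_injective.injOn) F.finite_toSet)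
    intro y hy; exact hy.2
  constructor
  · intro x hx
    set T : Set {a : α // a ≠ ⊥} := {y | y ∈ S ∧ x ≤ y} with hT_def
    have hTfin : T.Finite := hSfin.subset fun y hy => hy.1
    have hTne : T.Nonempty := by
      obtain ⟨d, hdF, hd, hxd, hdU⟩ := hF x hx
      exact ⟨⟨d, hd⟩, ⟨hdU, hdF⟩, hxd⟩
    obtain ⟨m, hmT, hmax⟩ : ∃ m ∈ T, ∀ a' ∈ T, id m ≤ id a' → id m = id a' := by
      obtain ⟨m, hmT, hmax⟩ := hTfin.exists_maximalFor id T hTne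
      exact ⟨m, hmT, fun a' ha' h => le_antisymm h (hmax ha' h)⟩
    refine ⟨m, hmT.1.1, hmT.2, ?_⟩
    intro y hy hmy
    obtain ⟨d, hdF, hd, hyd, hdU⟩ := hF y hy
    have hdT : (⟨d, hd⟩ : {a : α // a ≠ ⊥}) ∈ T :=
      ⟨⟨hdU, hdF⟩, le_trans hmT.2 (le_trans hmy hyd)⟩
    have : m = ⟨d, hd⟩ := hmax _ hdT (le_trans hmy hyd)
    exact le_antisymm (this ▸ hyd) hmy
  · apply hSfin.subset
    intro m hm
    obtain ⟨d, hdF, hd, hmd, hdU⟩ := hF m hm.1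
    have : (⟨d, hd⟩ : {a : α // a ≠ ⊥}) = m := hm.2 _ hdU hmd
    exact ⟨hm.1, by rw [← this]; exact hdF⟩
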